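/- For all real numbers s1, s2 with 2 < s1 ≤ s2, one has ζ(s2 − 1)/ζ(s2) ≤ ζ(s1 − 1)/ζ(s1); that is, the function s ↦ ζ(s−1)/ζ(s) is nonincreasing on the real interval (2,∞), where ζ denotes the Riemann zeta function. -/

import Mathlib

/-- The Riemann zeta function restricted to real arguments `s > 1`:
`ζ(s) = Σ_{n ≥ 1} n^{−s}`. -/
noncomputable def realZeta (s : ℝ) : ℝ := ∑' n : ℕ, ((n : ℝ) + 1) ^ (-s)

lemma zsummable {s : ℝ} (hs : 1 < s) :
    Summable (fun n : ℕ => ((n : ℝ) + 1) ^ (-s)) := by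
  have h : Summable (fun n : ℕ => (n : ℝ) ^ (-s)) :=
    (Real.summable_nat_rpow (p := -s)).2 (by linarith)
  have h2 := (summable_nat_add_iff (f := fun n : ℕ => (n : ℝ) ^ (-s)) 1).2 h
  convert h2 using 2 with n
  push_cast
  · rfl
  · simp

lemma zpos {s : ℝ} (hs : 1 < s) : 0 < realZeta s := by
  refine Summable.tsum_pos (zsummable hs) (fun n => Real.rpow_nonneg (by positivity) _) 0 ?_
  simp only [Nat.cast_zero, zero_add]
  positivity

lemma key_ineq (a b c : ℝ) (ha : 0 < a) (hb : 0 < b) (hc : 0 ≤ c) :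
    a * b ^ c + b * a ^ c ≤ a * a ^ c + b * b ^ c := by
  rcases le_total a b with h | h
  · have := Real.rpow_le_rpow ha.le h hc; nlinarith
  · have := Real.rpow_le_rpow hb.le h hc; nlinarith

lemma pt_ineq (a b s1 s2 : ℝ) (ha : 0 < a) (hb : 0 < b) (h12 : s1 ≤ s2) :
    a ^ (-(s2 - 1)) * b ^ (-s1) + b ^ (-(s2 - 1)) * a ^ (-s1)
      ≤ a ^ (-(s1 - 1)) * b ^ (-s2) + b ^ (-(s1 - 1)) * a ^ (-s2) := by
  have e1 : ∀ x : ℝ, 0 < x → x ^ (-(s2 - 1)) = x * x ^ (-s2) := by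
    intro x hx
    rw [show -(s2 - 1) = 1 + (-s2) by ring, Real.rpow_add hx, Real.rpow_one]
  have e2 : ∀ x : ℝ, 0 < x → x ^ (-s1) = x ^ (s2 - s1) * x ^ (-s2) := by
    intro x hx
    rw [← Real.rpow_add hx]; ring_nf
  have e3 : ∀ x : ℝ, 0 < x → x ^ (-(s1 - 1)) = x * (x ^ (s2 - s1) * x ^ (-s2)) := by
    intro x hx
    rw [show -(s1 - 1) = 1 + ((s2 - s1) + (-s2)) by ring, Real.rpow_add hx,
      Real.rpow_add hx, Real.rpow_one]
  rw [e1 a ha, e1 b hb, e2 a ha, e2 b hb, e3 a ha, e3 b hb]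
  have key := key_ineq a b (s2 - s1) ha hb (by linarith)
  have hA : 0 ≤ a ^ (-s2) := Real.rpow_nonneg ha.le _
  have hB : 0 ≤ b ^ (-s2) := Real.rpow_nonneg hb.le _
  nlinarith [mul_nonneg (mul_nonneg hA hB) (sub_nonneg.2 key)]

set_option maxHeartbeats 1000000 in
/-- the function `s ↦ ζ(s−1)/ζ(s)` is nonincreasing on the
real interval `(2,∞)`. -/
theorem zeta_ratio_antitone :
    ∀ s1 s2 : ℝ, 2 < s1 → s1 ≤ s2 →
      realZeta (s2 - 1) / realZeta s2 ≤ realZeta (s1 - 1) / realZeta s1 := by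
  intro s1 s2 h1 h12
  have hz1 : 0 < realZeta s1 := zpos (by linarith)
  have hz2 : 0 < realZeta s2 := zpos (by linarith)
  rw [div_le_div_iff₀ hz2 hz1]
  -- reduce to product inequality
  set F : ℕ × ℕ → ℝ := fun p => ((p.1 : ℝ) + 1) ^ (-(s2 - 1)) * ((p.2 : ℝ) + 1) ^ (-s1)
    with hF
  set G : ℕ × ℕ → ℝ := fun p => ((p.1 : ℝ) + 1) ^ (-(s1 - 1)) * ((p.2 : ℝ) + 1) ^ (-s2)
    with hG
  have hs21 : Summable (fun n : ℕ => ((n : ℝ) + 1) ^ (-(s2 - 1))) := zsummable (by linarith)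
  have hs11 : Summable (fun n : ℕ => ((n : ℝ) + 1) ^ (-(s1 - 1))) := zsummable (by linarith)
  have hs1 : Summable (fun n : ℕ => ((n : ℝ) + 1) ^ (-s1)) := zsummable (by linarith)
  have hs2 : Summable (fun n : ℕ => ((n : ℝ) + 1) ^ (-s2)) := zsummable (by linarith)
  have nonneg : ∀ (t : ℝ) (n : ℕ), 0 ≤ ((n : ℝ) + 1) ^ (-t) :=
    fun t n => Real.rpow_nonneg (by positivity) _
  have hFs : Summable F :=
    hs21.mul_of_nonneg hs1 (fun n => nonneg _ n) (fun n => nonneg _ n)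
  have hGs : Summable G :=
    hs11.mul_of_nonneg hs2 (fun n => nonneg _ n) (fun n => nonneg _ n)
  have eF : realZeta (s2 - 1) * realZeta s1 = ∑' p : ℕ × ℕ, F p :=
    Summable.tsum_mul_tsum hs21 hs1 hFs
  have eG : realZeta (s1 - 1) * realZeta s2 = ∑' p : ℕ × ℕ, G p :=
    Summable.tsum_mul_tsum hs11 hs2 hGs
  rw [eF, eG]
  -- symmetrize
  have hFs' : Summable (fun p : ℕ × ℕ => F p.swap) :=
    (Equiv.prodComm ℕ ℕ).summable_iff.2 hFs
  have hGs' : Summable (fun p : ℕ × ℕ => G p.swap) :=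
    (Equiv.prodComm ℕ ℕ).summable_iff.2 hGs
  have swF : ∑' p : ℕ × ℕ, F p.swap = ∑' p : ℕ × ℕ, F p :=
    (Equiv.prodComm ℕ ℕ).tsum_eq F
  have swG : ∑' p : ℕ × ℕ, G p.swap = ∑' p : ℕ × ℕ, G p :=
    (Equiv.prodComm ℕ ℕ).tsum_eq G
  have hmain : ∑' p : ℕ × ℕ, (F p + F p.swap) ≤ ∑' p : ℕ × ℕ, (G p + G p.swap) := by
    refine Summable.tsum_le_tsum ?_ (hFs.add hFs') (hGs.add hGs')
    intro p
    have := pt_ineq ((p.1 : ℝ) + 1) ((p.2 : ℝ) + 1) s1 s2 (by positivity) (by positivity) h12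
    simpa [hF, hG] using this
  rw [Summable.tsum_add hFs hFs', Summable.tsum_add hGs hGs', swF, swG] at hmain
  linarith
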